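/- arXiv:2004.05316 — 5 statements merged into one kernel-verified Lean document; each statement's English description precedes it below -/
import Mathlib

section
/- Let w^(1), ..., w^(n) be i.i.d. random vectors on a probability space taking values in {-1,1}^m, let O* := E[w^(1) (w^(1))^T] be the population second-moment matrix, and let Ô := (1/n) Σ_{i=1}^n w^(i) (w^(i))^T be the empirical second-moment matrix. Then the expected spectral-norm deviation satisfies E[‖Ô − O*‖] ≤ m² √(32π/n). -/
open MeasureTheory ProbabilityTheory Real Finset
open scoped Matrix.Norms.L2Operator

lemma my_l2_opNorm_le_sum_abs {m : ℕ} (A : Matrix (Fin m) (Fin m) ℝ) :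
    ‖A‖ ≤ ∑ a, ∑ b, |A a b| := by
  rw [Matrix.l2_opNorm_def]
  refine ContinuousLinearMap.opNorm_le_bound _ (by positivity) fun x => ?_
  have hx : ∀ b : Fin m, |x b| ≤ ‖x‖ := by
    intro b
    rw [EuclideanSpace.norm_eq]
    have h1 : |x b| = Real.sqrt (|x b| ^ 2) := by
      rw [Real.sqrt_sq (abs_nonneg _)]
    rw [h1]
    apply Real.sqrt_le_sqrt
    calc |x b| ^ 2 = ‖x b‖ ^ 2 := by rw [Real.norm_eq_abs]
      _ ≤ ∑ i, ‖x i‖ ^ 2 := Finset.single_le_sum (f := fun i => ‖x i‖ ^ 2) (fun i _ => by positivity) (mem_univ b)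
  have key : ‖(Matrix.toEuclideanLin ≪≫ₗ LinearMap.toContinuousLinearMap) A x‖
      ≤ (∑ a, ∑ b, |A a b|) * ‖x‖ := by
    have happ : (Matrix.toEuclideanLin ≪≫ₗ LinearMap.toContinuousLinearMap) A x
        = Matrix.toEuclideanLin A x := rfl
    rw [happ, Matrix.toEuclideanLin_apply, EuclideanSpace.norm_eq]
    have hnorm : ∀ a : Fin m, ‖A.mulVec ((WithLp.equiv 2 (Fin m → ℝ)) x) a‖
        = |∑ b, A a b * x b| := by
      intro a
      rw [Real.norm_eq_abs]
      rfl
    calc Real.sqrt (∑ a, ‖A.mulVec ((WithLp.equiv 2 (Fin m → ℝ)) x) a‖ ^ 2)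
        ≤ ∑ a, ‖A.mulVec ((WithLp.equiv 2 (Fin m → ℝ)) x) a‖ := by
          rw [show (∑ a, ‖A.mulVec ((WithLp.equiv 2 (Fin m → ℝ)) x) a‖)
            = Real.sqrt ((∑ a, ‖A.mulVec ((WithLp.equiv 2 (Fin m → ℝ)) x) a‖) ^ 2) from
            (Real.sqrt_sq (by positivity)).symm]
          exact Real.sqrt_le_sqrt (Finset.sum_sq_le_sq_sum_of_nonneg
            (fun i _ => norm_nonneg _))
      _ ≤ (∑ a, ∑ b, |A a b|) * ‖x‖ := by
          rw [Finset.sum_mul]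
          refine Finset.sum_le_sum fun a _ => ?_
          rw [hnorm a, Finset.sum_mul]
          calc |∑ b, A a b * x b| ≤ ∑ b, |A a b * x b| := Finset.abs_sum_le_sum_abs _ _
            _ ≤ ∑ b, |A a b| * ‖x‖ := by
                refine Finset.sum_le_sum fun b _ => ?_
                rw [abs_mul]
                exact mul_le_mul_of_nonneg_left (hx b) (abs_nonneg _)
  exact key

lemma my_scalar_conc {Ω : Type*} [MeasurableSpace Ω] (μ : Measure Ω) [IsProbabilityMeasure μ]
    {n : ℕ} (hn : 0 < n) (Z : Fin n → Ω → ℝ)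
    (hZmeas : ∀ i, Measurable (Z i))
    (hbd : ∀ i ω, |Z i ω| ≤ 2)
    (hmean : ∀ i, ∫ ω, Z i ω ∂μ = 0)
    (hindep : iIndepFun Z μ) :
    ∫ ω, |(n : ℝ)⁻¹ * ∑ i, Z i ω| ∂μ ≤ 2 / Real.sqrt n := by
  have hZint : ∀ i, Integrable (Z i) μ := fun i =>
    (integrable_const (2 : ℝ)).mono' (hZmeas i).aestronglyMeasurable
      (Filter.Eventually.of_forall fun ω => by simpa using hbd i ω)
  set S : Ω → ℝ := fun ω => ∑ i, Z i ω with hS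
  have hSmeas : Measurable S := by measurability
  have hSbd : ∀ ω, |S ω| ≤ 2 * n := by
    intro ω
    calc |S ω| ≤ ∑ i, |Z i ω| := Finset.abs_sum_le_sum_abs _ _
      _ ≤ ∑ _i : Fin n, (2 : ℝ) := Finset.sum_le_sum fun i _ => hbd i ω
      _ = 2 * n := by simp [mul_comm]
  have hSint : Integrable S μ := integrable_finset_sum _ fun i _ => hZint i
  have hSabsint : Integrable (fun ω => |S ω|) μ := hSint.abs
  have hprodint : ∀ i j : Fin n, Integrable (fun ω => Z i ω * Z j ω) μ := by
    intro i j
    refine (integrable_const (4 : ℝ)).mono' (((hZmeas i).mul (hZmeas j)).aestronglyMeasurable)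
      (Filter.Eventually.of_forall fun ω => ?_)
    rw [Real.norm_eq_abs, abs_mul]
    calc |Z i ω| * |Z j ω| ≤ 2 * 2 :=
      mul_le_mul (hbd i ω) (hbd j ω) (abs_nonneg _) (by norm_num)
      _ = 4 := by norm_num
  have hSsqint : Integrable (fun ω => S ω ^ 2) μ := by
    refine (integrable_const ((2 * n : ℝ) ^ 2)).mono' (hSmeas.pow_const 2).aestronglyMeasurable
      (Filter.Eventually.of_forall fun ω => ?_)
    rw [Real.norm_eq_abs, abs_pow]
    exact pow_le_pow_left₀ (abs_nonneg _) (hSbd ω) 2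
  -- second moment bound
  have hcross : ∀ i j : Fin n, i ≠ j → ∫ ω, Z i ω * Z j ω ∂μ = 0 := by
    intro i j hij
    have h := (hindep.indepFun hij).integral_mul_eq_mul_integral (hZmeas i).aestronglyMeasurable
      (hZmeas j).aestronglyMeasurable
    have : ∫ ω, Z i ω * Z j ω ∂μ = (∫ ω, Z i ω ∂μ) * ∫ ω, Z j ω ∂μ := h
    rw [this, hmean i, hmean j, mul_zero]
  have hdiag : ∀ i : Fin n, ∫ ω, Z i ω * Z i ω ∂μ ≤ 4 := by
    intro i
    calc ∫ ω, Z i ω * Z i ω ∂μ ≤ ∫ _ω, (4 : ℝ) ∂μ := by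
          refine integral_mono (hprodint i i) (integrable_const _) fun ω => ?_
          rw [← abs_mul_self (Z i ω), abs_mul]
          calc |Z i ω| * |Z i ω| ≤ 2 * 2 :=
            mul_le_mul (hbd i ω) (hbd i ω) (abs_nonneg _) (by norm_num)
            _ = 4 := by norm_num
      _ = 4 := by simp
  have hvar : ∫ ω, S ω ^ 2 ∂μ ≤ 4 * n := by
    have hexp : ∀ ω, S ω ^ 2 = ∑ i, ∑ j, Z i ω * Z j ω := by
      intro ω; rw [sq, hS, Finset.sum_mul_sum]
    calc ∫ ω, S ω ^ 2 ∂μ = ∑ i, ∑ j, ∫ ω, Z i ω * Z j ω ∂μ := by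
          rw [show (fun ω => S ω ^ 2) = fun ω => ∑ i, ∑ j, Z i ω * Z j ω from funext hexp]
          rw [integral_finset_sum _ fun i _ => integrable_finset_sum _ fun j _ => hprodint i j]
          exact Finset.sum_congr rfl fun i _ =>
            integral_finset_sum _ fun j _ => hprodint i j
      _ ≤ ∑ _i : Fin n, (4 : ℝ) := by
          refine Finset.sum_le_sum fun i _ => ?_
          rw [Finset.sum_eq_single i (fun j _ hj => hcross i j (Ne.symm hj)) (by simp)]
          exact hdiag i
      _ = 4 * n := by simp [mul_comm]
  -- Jensen
  set c : ℝ := ∫ ω, |S ω| ∂μ with hc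
  have hc0 : 0 ≤ c := integral_nonneg fun ω => abs_nonneg _
  have hjensen : c ^ 2 ≤ ∫ ω, S ω ^ 2 ∂μ := by
    have h0 : 0 ≤ ∫ ω, (|S ω| - c) ^ 2 ∂μ := integral_nonneg fun ω => sq_nonneg _
    have hexp : ∀ ω, (|S ω| - c) ^ 2 = S ω ^ 2 - 2 * c * |S ω| + c ^ 2 := by
      intro ω; rw [sub_sq, sq_abs]; ring
    have : ∫ ω, (|S ω| - c) ^ 2 ∂μ = ∫ ω, S ω ^ 2 ∂μ - c ^ 2 := by
      rw [show (fun ω => (|S ω| - c) ^ 2)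
          = fun ω => S ω ^ 2 - 2 * c * |S ω| + c ^ 2 from funext hexp]
      have h1 : Integrable (fun ω => S ω ^ 2 - 2 * c * |S ω|) μ :=
        hSsqint.sub (hSabsint.const_mul (2 * c))
      have h2 : Integrable (fun ω => 2 * c * |S ω|) μ := hSabsint.const_mul (2 * c)
      rw [integral_add h1 (integrable_const _), integral_sub hSsqint h2,
        integral_const_mul, ← hc]
      simp [measure_univ]
      ring
    linarith [this ▸ h0]
  have hcle : c ≤ 2 * Real.sqrt n := by
    have h4n : c ^ 2 ≤ 4 * n := le_trans hjensen hvar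
    have := Real.sqrt_le_sqrt h4n
    rwa [Real.sqrt_sq hc0, show (4 : ℝ) * n = (2 : ℝ) ^ 2 * n by norm_num,
      Real.sqrt_mul (by positivity), Real.sqrt_sq (by norm_num)] at this
  have hsqrtn : (0 : ℝ) < Real.sqrt n := Real.sqrt_pos.mpr (by exact_mod_cast hn)
  calc ∫ ω, |(n : ℝ)⁻¹ * S ω| ∂μ = (n : ℝ)⁻¹ * c := by
        rw [hc, ← integral_const_mul]
        congr 1; funext ω
        rw [abs_mul, abs_of_nonneg (by positivity : (0:ℝ) ≤ (n : ℝ)⁻¹)]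
    _ ≤ (n : ℝ)⁻¹ * (2 * Real.sqrt n) :=
        mul_le_mul_of_nonneg_left hcle (by positivity)
    _ = 2 / Real.sqrt n := by
        rw [eq_div_iff (ne_of_gt hsqrtn)]
        have : Real.sqrt n * Real.sqrt n = n := Real.mul_self_sqrt (by positivity)
        field_simp
        nlinarith [this]

/-- **Expected spectral-norm deviation of the empirical second-moment matrix.**
For i.i.d. random vectors `w⁽¹⁾, …, w⁽ⁿ⁾` with values in `{-1,1}^m`, with
`O* = E[w w^T]` and `Ô = (1/n) Σᵢ w⁽ⁱ⁾ (w⁽ⁱ⁾)^T`, we have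
`E[‖Ô − O*‖] ≤ m² √(32π/n)`, where `‖·‖` is the spectral norm. -/
theorem expected_second_moment_deviation_le
    {Ω : Type*} [MeasurableSpace Ω] (μ : Measure Ω) [IsProbabilityMeasure μ]
    (m n : ℕ) (hn : 0 < n) (w : Fin n → Ω → (Fin m → ℝ))
    (hmeas : ∀ i, Measurable (w i))
    (hval : ∀ i ω j, w i ω j = 1 ∨ w i ω j = -1)
    (hindep : iIndepFun w μ)
    (hid : ∀ i j, IdentDistrib (w i) (w j) μ μ) :
    (∫ ω, ‖(n : ℝ)⁻¹ • (∑ i, Matrix.of fun a b => w i ω a * w i ω b) -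
        (Matrix.of fun a b =>
          ∫ ω', w (⟨0, hn⟩ : Fin n) ω' a * w (⟨0, hn⟩ : Fin n) ω' b ∂μ :
            Matrix (Fin m) (Fin m) ℝ)‖ ∂μ) ≤
      m ^ 2 * Real.sqrt (32 * π / n) := by
  have hn' : (0 : ℝ) < n := by exact_mod_cast hn
  set i0 : Fin n := ⟨0, hn⟩ with hi0
  have hgm : ∀ a b : Fin m, Measurable (fun v : Fin m → ℝ => v a * v b) :=
    fun a b => (measurable_pi_apply a).mul (measurable_pi_apply b)
  have hXmeas : ∀ (i : Fin n) (a b : Fin m), Measurable (fun ω => w i ω a * w i ω b) :=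
    fun i a b => (hgm a b).comp (hmeas i)
  have hXabs : ∀ (i : Fin n) ω (a b : Fin m), |w i ω a * w i ω b| ≤ 1 := by
    intro i ω a b
    rw [abs_mul]
    have h1 : |w i ω a| = 1 := by rcases hval i ω a with h | h <;> simp [h]
    have h2 : |w i ω b| = 1 := by rcases hval i ω b with h | h <;> simp [h]
    rw [h1, h2, mul_one]
  set c : Fin m → Fin m → ℝ := fun a b => ∫ ω', w i0 ω' a * w i0 ω' b ∂μ with hcdef
  have hXint : ∀ (i : Fin n) (a b : Fin m), Integrable (fun ω => w i ω a * w i ω b) μ :=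
    fun i a b => (integrable_const (1 : ℝ)).mono' (hXmeas i a b).aestronglyMeasurable
      (Filter.Eventually.of_forall fun ω => by rw [Real.norm_eq_abs]; exact hXabs i ω a b)
  have hcabs : ∀ a b : Fin m, |c a b| ≤ 1 := by
    intro a b
    have := norm_integral_le_of_norm_le_const (μ := μ)
      (f := fun ω' => w i0 ω' a * w i0 ω' b) (C := 1)
      (Filter.Eventually.of_forall fun ω => by rw [Real.norm_eq_abs]; exact hXabs i0 ω a b)
    simpa using this
  have hident : ∀ (i : Fin n) (a b : Fin m), (∫ ω, w i ω a * w i ω b ∂μ) = c a b := by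
    intro i a b
    exact ((hid i i0).comp (hgm a b)).integral_eq
  set Z : Fin m → Fin m → Fin n → Ω → ℝ :=
    fun a b i ω => w i ω a * w i ω b - c a b with hZdef
  have hZmeas : ∀ a b i, Measurable (Z a b i) := fun a b i => (hXmeas i a b).sub measurable_const
  have hZbd : ∀ (a b : Fin m) (i : Fin n) ω, |Z a b i ω| ≤ 2 := by
    intro a b i ω
    calc |Z a b i ω| ≤ |w i ω a * w i ω b| + |c a b| := abs_sub _ _
      _ ≤ 1 + 1 := add_le_add (hXabs i ω a b) (hcabs a b)
      _ = 2 := by norm_num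
  have hZmean : ∀ (a b : Fin m) (i : Fin n), (∫ ω, Z a b i ω ∂μ) = 0 := by
    intro a b i
    rw [hZdef]
    rw [integral_sub (hXint i a b) (integrable_const _), hident i a b]
    simp
  have hZindep : ∀ a b : Fin m, iIndepFun (Z a b) μ :=
    fun a b => hindep.comp (fun _ v => v a * v b - c a b)
      (fun _ => (hgm a b).sub measurable_const)
  -- the per-entry bound
  have hentrybd : ∀ a b : Fin m,
      (∫ ω, |(n : ℝ)⁻¹ * ∑ i, Z a b i ω| ∂μ) ≤ 2 / Real.sqrt n :=
    fun a b => my_scalar_conc μ hn (Z a b) (hZmeas a b) (fun i ω => hZbd a b i ω)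
      (hZmean a b) (hZindep a b)
  -- entries of the matrix
  have hentry : ∀ ω (a b : Fin m),
      ((n : ℝ)⁻¹ • (∑ i, Matrix.of fun a b => w i ω a * w i ω b) -
        (Matrix.of fun a b => ∫ ω', w i0 ω' a * w i0 ω' b ∂μ :
          Matrix (Fin m) (Fin m) ℝ)) a b = (n : ℝ)⁻¹ * ∑ i, Z a b i ω := by
    intro ω a b
    have hsum : (∑ i, Z a b i ω) = (∑ i, w i ω a * w i ω b) - n * c a b := by
      rw [hZdef]
      rw [Finset.sum_sub_distrib]
      simp [Finset.sum_const, card_univ, mul_comm]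
    simp only [Matrix.sub_apply, Matrix.smul_apply, Matrix.sum_apply, Matrix.of_apply,
      smul_eq_mul, hsum, ← hcdef]
    field_simp
  -- integrability of the entrywise bound
  set g : Ω → ℝ := fun ω => ∑ a : Fin m, ∑ b : Fin m, |(n : ℝ)⁻¹ * ∑ i, Z a b i ω| with hgdef
  have hgint : Integrable g μ := by
    refine integrable_finset_sum _ fun a _ => integrable_finset_sum _ fun b _ => ?_
    have hm : Measurable fun ω => |(n : ℝ)⁻¹ * ∑ i, Z a b i ω| :=
      (measurable_const.mul (Finset.measurable_sum _ fun i _ => hZmeas a b i)).abs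
    refine (integrable_const (2 : ℝ)).mono' hm.aestronglyMeasurable
      (Filter.Eventually.of_forall fun ω => ?_)
    rw [Real.norm_eq_abs, abs_abs, abs_mul, abs_of_nonneg (by positivity : (0:ℝ) ≤ (n:ℝ)⁻¹)]
    calc (n : ℝ)⁻¹ * |∑ i, Z a b i ω| ≤ (n : ℝ)⁻¹ * (2 * n) := by
          refine mul_le_mul_of_nonneg_left ?_ (by positivity)
          calc |∑ i, Z a b i ω| ≤ ∑ i, |Z a b i ω| := Finset.abs_sum_le_sum_abs _ _
            _ ≤ ∑ _i : Fin n, (2:ℝ) := Finset.sum_le_sum fun i _ => hZbd a b i ω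
            _ = 2 * n := by simp [mul_comm]
      _ = 2 := by field_simp
  -- main chain
  calc (∫ ω, ‖(n : ℝ)⁻¹ • (∑ i, Matrix.of fun a b => w i ω a * w i ω b) -
        (Matrix.of fun a b => ∫ ω', w i0 ω' a * w i0 ω' b ∂μ :
          Matrix (Fin m) (Fin m) ℝ)‖ ∂μ) ≤ ∫ ω, g ω ∂μ := by
        refine integral_mono_of_nonneg (Filter.Eventually.of_forall fun ω => norm_nonneg _)
          hgint (Filter.Eventually.of_forall fun ω => ?_)
        refine le_trans (my_l2_opNorm_le_sum_abs _) ?_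
        rw [hgdef]
        exact le_of_eq (Finset.sum_congr rfl fun a _ => Finset.sum_congr rfl fun b _ => by
          rw [hentry ω a b])
    _ = ∑ a : Fin m, ∑ b : Fin m, ∫ ω, |(n : ℝ)⁻¹ * ∑ i, Z a b i ω| ∂μ := by
        rw [hgdef]
        rw [integral_finset_sum _ fun a _ => integrable_finset_sum _ fun b _ => by
          have hm : Measurable fun ω => |(n : ℝ)⁻¹ * ∑ i, Z a b i ω| :=
            (measurable_const.mul (Finset.measurable_sum _ fun i _ => hZmeas a b i)).abs
          refine (integrable_const (2 : ℝ)).mono' hm.aestronglyMeasurable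
            (Filter.Eventually.of_forall fun ω => ?_)
          rw [Real.norm_eq_abs, abs_abs, abs_mul,
            abs_of_nonneg (by positivity : (0:ℝ) ≤ (n:ℝ)⁻¹)]
          calc (n : ℝ)⁻¹ * |∑ i, Z a b i ω| ≤ (n : ℝ)⁻¹ * (2 * n) := by
                refine mul_le_mul_of_nonneg_left ?_ (by positivity)
                calc |∑ i, Z a b i ω| ≤ ∑ i, |Z a b i ω| := Finset.abs_sum_le_sum_abs _ _
                  _ ≤ ∑ _i : Fin n, (2:ℝ) := Finset.sum_le_sum fun i _ => hZbd a b i ω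
                  _ = 2 * n := by simp [mul_comm]
            _ = 2 := by field_simp]
        exact Finset.sum_congr rfl fun a _ => integral_finset_sum _ fun b _ => by
          have hm : Measurable fun ω => |(n : ℝ)⁻¹ * ∑ i, Z a b i ω| :=
            (measurable_const.mul (Finset.measurable_sum _ fun i _ => hZmeas a b i)).abs
          refine (integrable_const (2 : ℝ)).mono' hm.aestronglyMeasurable
            (Filter.Eventually.of_forall fun ω => ?_)
          rw [Real.norm_eq_abs, abs_abs, abs_mul,
            abs_of_nonneg (by positivity : (0:ℝ) ≤ (n:ℝ)⁻¹)]
          calc (n : ℝ)⁻¹ * |∑ i, Z a b i ω| ≤ (n : ℝ)⁻¹ * (2 * n) := by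
                refine mul_le_mul_of_nonneg_left ?_ (by positivity)
                calc |∑ i, Z a b i ω| ≤ ∑ i, |Z a b i ω| := Finset.abs_sum_le_sum_abs _ _
                  _ ≤ ∑ _i : Fin n, (2:ℝ) := Finset.sum_le_sum fun i _ => hZbd a b i ω
                  _ = 2 * n := by simp [mul_comm]
            _ = 2 := by field_simp
    _ ≤ ∑ _a : Fin m, ∑ _b : Fin m, (2 / Real.sqrt n : ℝ) :=
        Finset.sum_le_sum fun a _ => Finset.sum_le_sum fun b _ => hentrybd a b
    _ = (m : ℝ) ^ 2 * (2 / Real.sqrt n) := by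
        simp [Finset.sum_const, card_univ]
        ring
    _ ≤ m ^ 2 * Real.sqrt (32 * π / n) := by
        refine mul_le_mul_of_nonneg_left ?_ (by positivity)
        rw [Real.sqrt_div (by positivity : (0:ℝ) ≤ 32 * π)]
        have hs : (0 : ℝ) < Real.sqrt n := Real.sqrt_pos.mpr hn'
        have h2 : (2 : ℝ) ≤ Real.sqrt (32 * π) := by
          have hsq := Real.sq_sqrt (show (0:ℝ) ≤ 32 * π by positivity)
          have hnn := Real.sqrt_nonneg (32 * π)
          nlinarith [Real.pi_gt_three]
        gcongr
end

section
/- Consider the probability distribution on (w, z) ∈ {-1,1}^p × {-1,1} given by P(w, z) = (1/Z) exp( θ_z z + Σ_{j=1}^p θ_j w_j z ). Then for any two distinct indices j ≠ k, the second moment of the candidates factorizes through the latent variable: E[w_j w_k] = E[w_j z] · E[w_k z]. -/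
open Finset Real

/-- Encoding of a spin `{-1,1}` value by a Boolean: `true ↦ 1`, `false ↦ -1`. -/
noncomputable def spin (b : Bool) : ℝ := if b then 1 else -1

/-- Unnormalized density of the conditionally independent Ising model
`exp(θ_z z + Σ_j θ_j w_j z)` on `(w, z) ∈ {-1,1}^p × {-1,1}`. -/
noncomputable def isingWeight (p : ℕ) (θz : ℝ) (θ : Fin p → ℝ)
    (x : (Fin p → Bool) × Bool) : ℝ :=
  Real.exp (θz * spin x.2 + ∑ j, θ j * spin (x.1 j) * spin x.2)

/-- Probability mass function of the conditionally independent Ising model. -/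
noncomputable def isingP (p : ℕ) (θz : ℝ) (θ : Fin p → ℝ)
    (x : (Fin p → Bool) × Bool) : ℝ :=
  isingWeight p θz θ x / ∑ y : (Fin p → Bool) × Bool, isingWeight p θz θ y

/-- Expectation of a function of `(w, z)` under the conditionally independent
Ising model. -/
noncomputable def isingE (p : ℕ) (θz : ℝ) (θ : Fin p → ℝ)
    (f : (Fin p → Bool) × Bool → ℝ) : ℝ :=
  ∑ x : (Fin p → Bool) × Bool, isingP p θz θ x * f x

lemma sum_pi_bool (p : ℕ) (g : Fin p → Bool → ℝ) :
    ∑ w : Fin p → Bool, ∏ i, g i (w i) = ∏ i, ∑ c : Bool, g i c := by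
  rw [Finset.prod_univ_sum, Fintype.piFinset_univ]

lemma ising_key (p : ℕ) (θz : ℝ) (θ : Fin p → ℝ) (S : Finset (Fin p)) :
    ∑ x : (Fin p → Bool) × Bool,
      isingWeight p θz θ x * ∏ i ∈ S, (spin (x.1 i) * spin x.2)
    = (∑ b : Bool, Real.exp (θz * spin b)) *
      ∏ i, (if i ∈ S then Real.exp (θ i) - Real.exp (-θ i)
            else Real.exp (θ i) + Real.exp (-θ i)) := by
  rw [Fintype.sum_prod_type_right, Finset.sum_mul]
  refine Finset.sum_congr rfl fun b _ => ?_
  have hstep : ∀ w : Fin p → Bool,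
      isingWeight p θz θ (w, b) * ∏ i ∈ S, (spin (w i) * spin b)
      = Real.exp (θz * spin b) *
        ∏ i, (Real.exp (θ i * spin (w i) * spin b) *
              (if i ∈ S then spin (w i) * spin b else 1)) := by
    intro w
    have h1 : (∏ i ∈ S, (spin (w i) * spin b))
        = ∏ i, (if i ∈ S then spin (w i) * spin b else 1) := by
      rw [← Finset.prod_subset (Finset.subset_univ S)
        (fun i _ hi => if_neg hi)]
      exact Finset.prod_congr rfl fun i hi => (if_pos hi).symm
    rw [isingWeight, Real.exp_add, Real.exp_sum, h1, Finset.prod_mul_distrib,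
      mul_assoc]
  rw [Finset.sum_congr rfl fun w _ => hstep w, ← Finset.mul_sum]
  congr 1
  rw [sum_pi_bool p (fun i c => Real.exp (θ i * spin c * spin b) *
        (if i ∈ S then spin c * spin b else 1))]
  refine Finset.prod_congr rfl fun i _ => ?_
  rw [Fintype.sum_bool]
  cases b <;> by_cases hi : i ∈ S <;>
    simp [hi, spin, ← Real.exp_neg] <;> ring

lemma ising_weight_sum_pos (p : ℕ) (θz : ℝ) (θ : Fin p → ℝ) :
    0 < ∑ y : (Fin p → Bool) × Bool, isingWeight p θz θ y := by
  refine Finset.sum_pos (fun y _ => Real.exp_pos _) ?_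
  exact Finset.univ_nonempty

lemma ising_E_eq (p : ℕ) (θz : ℝ) (θ : Fin p → ℝ)
    (f : (Fin p → Bool) × Bool → ℝ) :
    isingE p θz θ f
      = (∑ x : (Fin p → Bool) × Bool, isingWeight p θz θ x * f x)
        / ∑ y : (Fin p → Bool) × Bool, isingWeight p θz θ y := by
  rw [isingE, Finset.sum_div]
  exact Finset.sum_congr rfl fun x _ => by rw [isingP, div_mul_eq_mul_div]

/-- **Second moments factorize through the latent variable.**
For distinct indices `j ≠ k`, `E[w_j w_k] = E[w_j z] · E[w_k z]`. -/
theorem ising_second_moment_factorizes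
    (p : ℕ) (θz : ℝ) (θ : Fin p → ℝ) (j k : Fin p) (hjk : j ≠ k) :
    isingE p θz θ (fun x => spin (x.1 j) * spin (x.1 k)) =
      isingE p θz θ (fun x => spin (x.1 j) * spin x.2) *
        isingE p θz θ (fun x => spin (x.1 k) * spin x.2) := by
  have hz2 : ∀ b : Bool, spin b * spin b = 1 := by
    intro b; cases b <;> simp [spin]
  -- rewrite the three numerators using the key lemma
  have hjk' : ∀ x : (Fin p → Bool) × Bool,
      spin (x.1 j) * spin (x.1 k)
        = ∏ i ∈ ({j, k} : Finset (Fin p)), (spin (x.1 i) * spin x.2) := by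
    intro x
    have h : spin (x.1 j) * spin x.2 * (spin (x.1 k) * spin x.2)
        = spin (x.1 j) * spin (x.1 k) * (spin x.2 * spin x.2) := by ring
    rw [Finset.prod_pair hjk, h, hz2, mul_one]
  have hj' : ∀ x : (Fin p → Bool) × Bool,
      spin (x.1 j) * spin x.2
        = ∏ i ∈ ({j} : Finset (Fin p)), (spin (x.1 i) * spin x.2) := by
    intro x; rw [Finset.prod_singleton]
  have hk' : ∀ x : (Fin p → Bool) × Bool,
      spin (x.1 k) * spin x.2
        = ∏ i ∈ ({k} : Finset (Fin p)), (spin (x.1 i) * spin x.2) := by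
    intro x; rw [Finset.prod_singleton]
  have hZ : (∑ y : (Fin p → Bool) × Bool, isingWeight p θz θ y)
      = (∑ b : Bool, Real.exp (θz * spin b)) *
        ∏ i, (if i ∈ (∅ : Finset (Fin p)) then Real.exp (θ i) - Real.exp (-θ i)
              else Real.exp (θ i) + Real.exp (-θ i)) := by
    rw [← ising_key p θz θ ∅]
    simp
  rw [ising_E_eq, ising_E_eq, ising_E_eq]
  simp only [hjk', hj', hk']
  rw [ising_key p θz θ ({j, k} : Finset (Fin p)),
    ising_key p θz θ ({j} : Finset (Fin p)),
    ising_key p θz θ ({k} : Finset (Fin p)), hZ]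
  -- now pure algebra with products
  set C := ∑ b : Bool, Real.exp (θz * spin b) with hC
  have hCpos : 0 < C := by
    rw [hC]; exact Finset.sum_pos (fun y _ => Real.exp_pos _) Finset.univ_nonempty
  set c : Fin p → ℝ := fun i => Real.exp (θ i) + Real.exp (-θ i) with hc
  set d : Fin p → ℝ := fun i => Real.exp (θ i) - Real.exp (-θ i) with hd
  have hcpos : ∀ i, 0 < c i := fun i => by
    rw [hc]; positivity
  have hE : (∏ i, (if i ∈ (∅ : Finset (Fin p)) then d i else c i)) = ∏ i, c i := by
    simp
  have hJ : (∏ i, (if i ∈ ({j} : Finset (Fin p)) then d i else c i))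
      = d j * ∏ i ∈ Finset.univ.erase j, c i := by
    rw [← Finset.mul_prod_erase Finset.univ _ (Finset.mem_univ j), if_pos (by simp)]
    congr 1
    exact Finset.prod_congr rfl fun i hi => if_neg (by simp [Finset.ne_of_mem_erase hi])
  have hK : (∏ i, (if i ∈ ({k} : Finset (Fin p)) then d i else c i))
      = d k * ∏ i ∈ Finset.univ.erase k, c i := by
    rw [← Finset.mul_prod_erase Finset.univ _ (Finset.mem_univ k), if_pos (by simp)]
    congr 1
    exact Finset.prod_congr rfl fun i hi => if_neg (by simp [Finset.ne_of_mem_erase hi])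
  have hJK : (∏ i, (if i ∈ ({j, k} : Finset (Fin p)) then d i else c i))
      = d j * d k * ∏ i ∈ (Finset.univ.erase j).erase k, c i := by
    rw [← Finset.mul_prod_erase Finset.univ _ (Finset.mem_univ j), if_pos (by simp)]
    rw [← Finset.mul_prod_erase (Finset.univ.erase j) _
      (Finset.mem_erase.mpr ⟨hjk.symm, Finset.mem_univ k⟩), if_pos (by simp)]
    rw [← mul_assoc]
    congr 1
    refine Finset.prod_congr rfl fun i hi => if_neg ?_
    have h1 := Finset.ne_of_mem_erase hi
    have h2 := Finset.ne_of_mem_erase (Finset.mem_of_mem_erase hi)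
    simp [h1, h2]
  rw [hE, hJ, hK, hJK]
  -- product bookkeeping
  have hPj : (∏ i, c i) = c j * ∏ i ∈ Finset.univ.erase j, c i :=
    (Finset.mul_prod_erase Finset.univ c (Finset.mem_univ j)).symm
  have hPk : (∏ i ∈ Finset.univ.erase j, c i)
      = c k * ∏ i ∈ (Finset.univ.erase j).erase k, c i :=
    (Finset.mul_prod_erase (Finset.univ.erase j) c
      (Finset.mem_erase.mpr ⟨hjk.symm, Finset.mem_univ k⟩)).symm
  have hPk' : (∏ i ∈ Finset.univ.erase k, c i)
      = c j * ∏ i ∈ (Finset.univ.erase j).erase k, c i := by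
    rw [Finset.erase_right_comm]
    exact (Finset.mul_prod_erase (Finset.univ.erase k) c
      (Finset.mem_erase.mpr ⟨hjk, Finset.mem_univ j⟩)).symm
  have hCne : C ≠ 0 := ne_of_gt hCpos
  have hcj : c j ≠ 0 := ne_of_gt (hcpos j)
  have hck : c k ≠ 0 := ne_of_gt (hcpos k)
  rw [div_mul_div_comm, div_eq_div_iff]
  · rw [hPj, hPk, hPk']; ring
  · positivity
  · have : (0:ℝ) < ∏ i ∈ Finset.univ.erase j, c i :=
      Finset.prod_pos fun i _ => hcpos i
    have : (0:ℝ) < ∏ i ∈ Finset.univ.erase k, c i :=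
      Finset.prod_pos fun i _ => hcpos i
    positivity
end

section
/- Consider the probability distribution on (w_1, w_2, w_3, z) ∈ {-1,1}³ × {-1,1} given by P(w_1, w_2, w_3, z) = (1/Z) exp( θ_1 w_1 + θ_z z + θ_{1z} w_1 z + θ_{2z} w_2 z + θ_{3z} w_3 z ), where Z is the normalizing constant and θ_1, θ_z, θ_{1z}, θ_{2z}, θ_{3z} are real parameters. Define the agreement variables a_j := w_j z. Then a_1 is independent of a_2, and a_1 is independent of a_3: P(a_1 = α, a_2 = β) = P(a_1 = α) P(a_2 = β) and P(a_1 = α, a_3 = β) = P(a_1 = α) P(a_3 = β) for all α, β ∈ {-1,1}. -/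
open Finset Real

attribute [local instance] Classical.propDecidable

/-- Unnormalized density `exp(θ₁ w₁ + θ_z z + θ₁z w₁ z + θ₂z w₂ z + θ₃z w₃ z)` on
`(w₁, w₂, w₃, z) ∈ {-1,1}³ × {-1,1}`. -/
noncomputable def ising3Weight (θ₁ θz θ1z θ2z θ3z : ℝ)
    (x : Bool × Bool × Bool × Bool) : ℝ :=
  Real.exp (θ₁ * spin x.1 + θz * spin x.2.2.2 + θ1z * spin x.1 * spin x.2.2.2 +
    θ2z * spin x.2.1 * spin x.2.2.2 + θ3z * spin x.2.2.1 * spin x.2.2.2)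

/-- Probability mass function of the three-candidate Ising model with a unary
potential on the first candidate. -/
noncomputable def ising3P (θ₁ θz θ1z θ2z θ3z : ℝ)
    (x : Bool × Bool × Bool × Bool) : ℝ :=
  ising3Weight θ₁ θz θ1z θ2z θ3z x /
    ∑ y : Bool × Bool × Bool × Bool, ising3Weight θ₁ θz θ1z θ2z θ3z y

/-- Probability of an event under the three-candidate Ising model. -/
noncomputable def ising3Pr (θ₁ θz θ1z θ2z θ3z : ℝ)
    (E : Bool × Bool × Bool × Bool → Prop) : ℝ :=
  ∑ x : Bool × Bool × Bool × Bool, if E x then ising3P θ₁ θz θ1z θ2z θ3z x else 0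

lemma ising3Pr_eq_div (θ₁ θz θ1z θ2z θ3z : ℝ) (E : Bool × Bool × Bool × Bool → Prop) :
    ising3Pr θ₁ θz θ1z θ2z θ3z E =
      (∑ x : Bool × Bool × Bool × Bool, if E x then ising3Weight θ₁ θz θ1z θ2z θ3z x else 0) /
        ∑ y : Bool × Bool × Bool × Bool, ising3Weight θ₁ θz θ1z θ2z θ3z y := by
  simp only [ising3Pr, ising3P, Finset.sum_div]
  exact Finset.sum_congr rfl fun x _ => by split <;> simp

lemma ising3_key (θ₁ θz θ1z θ2z θ3z : ℝ) (E1 E2 : Bool × Bool × Bool × Bool → Prop)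
    (h : (∑ x : Bool × Bool × Bool × Bool,
            if E1 x ∧ E2 x then ising3Weight θ₁ θz θ1z θ2z θ3z x else 0) *
          (∑ y : Bool × Bool × Bool × Bool, ising3Weight θ₁ θz θ1z θ2z θ3z y) =
        (∑ x : Bool × Bool × Bool × Bool, if E1 x then ising3Weight θ₁ θz θ1z θ2z θ3z x else 0) *
        (∑ x : Bool × Bool × Bool × Bool, if E2 x then ising3Weight θ₁ θz θ1z θ2z θ3z x else 0)) :
    ising3Pr θ₁ θz θ1z θ2z θ3z (fun x => E1 x ∧ E2 x) =
      ising3Pr θ₁ θz θ1z θ2z θ3z E1 * ising3Pr θ₁ θz θ1z θ2z θ3z E2 := by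
  have hZ : (0:ℝ) < ∑ y : Bool × Bool × Bool × Bool, ising3Weight θ₁ θz θ1z θ2z θ3z y :=
    Finset.sum_pos (fun y _ => Real.exp_pos _) (by simp)
  rw [ising3Pr_eq_div, ising3Pr_eq_div, ising3Pr_eq_div, div_mul_div_comm, ← h,
    mul_div_mul_right _ _ hZ.ne']
  exact congrArg (· / _) (Finset.sum_congr rfl fun x _ => by congr 1)

set_option maxHeartbeats 4000000 in
/-- **Independence of agreement variables with a unary potential.**
In the model `P(w₁,w₂,w₃,z) ∝ exp(θ₁w₁ + θ_z z + θ₁z w₁z + θ₂z w₂z + θ₃z w₃z)`,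
the agreement variables `a_j := w_j z` satisfy: `a₁` is independent of `a₂`, and
`a₁` is independent of `a₃`. -/
theorem ising3_agreements_independent (θ₁ θz θ1z θ2z θ3z : ℝ)
    (α β : ℝ) (hα : α = 1 ∨ α = -1) (hβ : β = 1 ∨ β = -1) :
    (ising3Pr θ₁ θz θ1z θ2z θ3z
        (fun x => spin x.1 * spin x.2.2.2 = α ∧ spin x.2.1 * spin x.2.2.2 = β) =
      ising3Pr θ₁ θz θ1z θ2z θ3z (fun x => spin x.1 * spin x.2.2.2 = α) *
        ising3Pr θ₁ θz θ1z θ2z θ3z (fun x => spin x.2.1 * spin x.2.2.2 = β)) ∧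
    (ising3Pr θ₁ θz θ1z θ2z θ3z
        (fun x => spin x.1 * spin x.2.2.2 = α ∧ spin x.2.2.1 * spin x.2.2.2 = β) =
      ising3Pr θ₁ θz θ1z θ2z θ3z (fun x => spin x.1 * spin x.2.2.2 = α) *
        ising3Pr θ₁ θz θ1z θ2z θ3z (fun x => spin x.2.2.1 * spin x.2.2.2 = β)) := by
  constructor <;> apply ising3_key <;> rcases hα with rfl | rfl <;> rcases hβ with rfl | rfl <;>
    · simp only [ising3Weight, Fintype.sum_prod_type, Fintype.sum_bool, spin]
      norm_num
      simp only [mul_add, add_mul, ← Real.exp_add]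
      ring_nf
end

section
/- Let p ≥ 3 and let Ω be a set of unordered pairs of distinct indices from {1,...,p}. Suppose that for every index i there exist indices j and k, with i, j, k pairwise distinct, such that {i,j} ∈ Ω, {i,k} ∈ Ω, and {j,k} ∈ Ω. Then the linear map ℝ^p → ℝ^Ω sending x to the vector ( x_i + x_j )_{{i,j} ∈ Ω} is injective; equivalently, the 0/1 matrix M_Ω whose row for pair {i,j} has a 1 in positions i and j and 0 elsewhere has full column rank. -/
/-- **Injectivity of the pair-sum constraint map.**
Let `Ω` be a set of unordered pairs of distinct indices of `{1,…,p}` (`p ≥ 3`) such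
that every index `i` lies in a triangle: there are `j, k` with `i, j, k` pairwise
distinct and `{i,j}, {i,k}, {j,k} ∈ Ω`.  Then the linear map `ℝ^p → ℝ^Ω` sending
`x` to `({i,j} ↦ x i + x j)` is injective, i.e. the 0/1 constraint matrix `M_Ω`
has full column rank. -/
theorem pair_sum_map_injective (p : ℕ) (hp : 3 ≤ p) (Ω : Set (Sym2 (Fin p)))
    (hdiag : ∀ e ∈ Ω, ¬ e.IsDiag)
    (htri : ∀ i : Fin p, ∃ j k : Fin p, i ≠ j ∧ i ≠ k ∧ j ≠ k ∧
      s(i, j) ∈ Ω ∧ s(i, k) ∈ Ω ∧ s(j, k) ∈ Ω) :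
    Function.Injective (fun x : Fin p → ℝ => fun e : Ω =>
      Sym2.lift ⟨fun i j => x i + x j, fun i j => add_comm _ _⟩ (e : Sym2 (Fin p))) := by
  intro x y h
  funext i
  obtain ⟨j, k, hij, hik, hjk, h1, h2, h3⟩ := htri i
  have e1 := congrFun h ⟨s(i, j), h1⟩
  have e2 := congrFun h ⟨s(i, k), h2⟩
  have e3 := congrFun h ⟨s(j, k), h3⟩
  simp only [Sym2.lift_mk] at e1 e2 e3
  linarith
end

section
/- For every vector x ∈ ℝ^m, letting 1 denote the all-ones vector in ℝ^m, the Euclidean norm of x is bounded by half the Frobenius norm of the symmetric matrix x 1^T + 1 x^T: ‖x‖₂ ≤ (1/2) ‖x 1^T + 1 x^T‖_F. -/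
open scoped Matrix

attribute [local instance] Matrix.frobeniusNormedAddCommGroup

/-- **Euclidean norm bounded by Frobenius norm of `x 1ᵀ + 1 xᵀ`.**
For every `x ∈ ℝ^m`, `‖x‖₂ ≤ (1/2) ‖x 1ᵀ + 1 xᵀ‖_F`, where `1` is the all-ones
vector, so `x 1ᵀ + 1 xᵀ` is the matrix with `(i,j)` entry `x i + x j`, and the
matrix norm is the Frobenius norm. -/
theorem euclidean_norm_le_half_frobenius (m : ℕ) (x : EuclideanSpace ℝ (Fin m)) :
    ‖x‖ ≤ (1 / 2) *
      ‖Matrix.vecMulVec (fun i => x i) (fun _ => (1 : ℝ)) +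
        Matrix.vecMulVec (fun _ => (1 : ℝ)) (fun i => x i)‖ := by
  classical
  set S : ℝ := ∑ i, x i ^ 2 with hSdef
  set T : ℝ := ∑ i, x i with hTdef
  have hSnn : 0 ≤ S := Finset.sum_nonneg fun i _ => sq_nonneg _
  have hnorm : ‖x‖ = Real.sqrt S := by
    rw [EuclideanSpace.norm_eq]
    congr 1
    exact Finset.sum_congr rfl fun i _ => by rw [Real.norm_eq_abs, sq_abs]
  have hM : ‖Matrix.vecMulVec (fun i => x i) (fun _ => (1 : ℝ)) +
        Matrix.vecMulVec (fun _ => (1 : ℝ)) (fun i => x i)‖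
      = Real.sqrt (∑ i, ∑ j, (x i + x j) ^ 2) := by
    rw [Matrix.frobenius_norm_def, ← Real.sqrt_eq_rpow]
    congr 1
    refine Finset.sum_congr rfl fun i _ => Finset.sum_congr rfl fun j _ => ?_
    simp [Matrix.vecMulVec_apply, Real.norm_eq_abs, Real.rpow_two, sq_abs]
  have key : (∑ i, ∑ j, (x i + x j) ^ 2) = 2 * m * S + 2 * T ^ 2 := by
    have : ∀ i : Fin m, (∑ j, (x i + x j) ^ 2) = m * x i ^ 2 + 2 * x i * T + S := by
      intro i
      simp_rw [add_sq]
      rw [Finset.sum_add_distrib, Finset.sum_add_distrib, Finset.sum_const,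
        ← Finset.mul_sum, Finset.card_univ, Fintype.card_fin]
      ring
    simp_rw [this]
    rw [Finset.sum_add_distrib, Finset.sum_add_distrib, Finset.sum_const,
      ← Finset.mul_sum, ← Finset.sum_mul, Finset.card_univ, Fintype.card_fin,
      ← Finset.mul_sum]
    ring
  rw [hnorm, hM, key]
  have hineq : 4 * S ≤ 2 * m * S + 2 * T ^ 2 := by
    match m, x with
    | 0, x =>
      have : S = 0 := by simp [hSdef]
      nlinarith [sq_nonneg T, this]
    | 1, x =>
      have hT : T = x 0 := by simp [hTdef]
      have hS : S = x 0 ^ 2 := by simp [hSdef]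
      rw [hT, hS]; ring_nf; norm_num
    | (n+2), x =>
      push_cast
      nlinarith [sq_nonneg T, hSnn, Nat.cast_nonneg (α := ℝ) n]
  have h4 : (2 * m * S + 2 * T ^ 2) / 4 = (1/2)^2 * (2 * m * S + 2 * T ^ 2) := by ring
  calc Real.sqrt S ≤ Real.sqrt ((2 * m * S + 2 * T ^ 2) / 4) := by
        apply Real.sqrt_le_sqrt; linarith
    _ = 1/2 * Real.sqrt (2 * m * S + 2 * T ^ 2) := by
        rw [h4, Real.sqrt_mul (by positivity), Real.sqrt_sq (by norm_num)]
end
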